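/- With the hypotheses of the previous statements (β₀, β₁ weak eventual identities, α a weak eventual identity on the F-manifold), one has [β₀ ∘ α^n, β₁ ∘ α^m] = α^{n+m−1} ∘ ( m [β₀, β₁ ∘ α] + n [β₀ ∘ α, β₁] ) − (n+m−1) α^{n+m} ∘ [β₀, β₁] for all n, m ≥ 0. -/
import Mathlib


/-- Abstract formalization: on an F-manifold (Hertling–Manin condition for `∘`), if
`β₀, β₁, α` are weak eventual identities then for `n + m ≥ 1`:
`[β₀∘α^n, β₁∘α^m] = α^{n+m−1}∘(m[β₀,β₁∘α] + n[β₀∘α,β₁]) − (n+m−1)α^{n+m}∘[β₀,β₁]`. -/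
theorem stmt10 (V : Type*) [LieRing V]
    (mul : V → V → V) (e : V)
    (hcomm : ∀ X Y, mul X Y = mul Y X)
    (hassoc : ∀ X Y Z, mul (mul X Y) Z = mul X (mul Y Z))
    (hunit : ∀ X, mul e X = X)
    (haddl : ∀ X Y Z, mul (X + Y) Z = mul X Z + mul Y Z)
    (LD : V → V → V → V)
    (hLD : ∀ Z X Y, LD Z X Y = ⁅Z, mul X Y⁆ - mul ⁅Z, X⁆ Y - mul X ⁅Z, Y⁆)
    (hHM : ∀ X Y Z W, LD (mul X Y) Z W = mul X (LD Y Z W) + mul Y (LD X Z W))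
    (α β₀ β₁ : V)
    (hβ₀ : ∀ X Y, LD β₀ X Y = mul ⁅e, β₀⁆ (mul X Y))
    (hβ₁ : ∀ X Y, LD β₁ X Y = mul ⁅e, β₁⁆ (mul X Y))
    (hα : ∀ X Y, LD α X Y = mul ⁅e, α⁆ (mul X Y))
    (apow : ℕ → V) (hpow0 : apow 0 = e) (hpowS : ∀ k, apow (k + 1) = mul α (apow k)) :
    ∀ n m : ℕ, 1 ≤ n + m →
      ⁅mul β₀ (apow n), mul β₁ (apow m)⁆
        = mul (apow (n + m - 1)) (m • ⁅β₀, mul β₁ α⁆ + n • ⁅mul β₀ α, β₁⁆)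
          - (n + m - 1) • mul (apow (n + m)) ⁅β₀, β₁⁆ := by
  -- bilinearity helpers
  have haddr : ∀ X Y Z, mul X (Y + Z) = mul X Y + mul X Z := by
    intro X Y Z; rw [hcomm, haddl, hcomm Y X, hcomm Z X]
  have h0l : ∀ X, mul 0 X = 0 := by
    intro X
    have h := haddl 0 0 X
    simpa using h.symm
  have h0r : ∀ X, mul X 0 = 0 := by
    intro X; rw [hcomm]; exact h0l X
  have hnegl : ∀ X Y, mul (-X) Y = -mul X Y := by
    intro X Y
    have h : mul (-X) Y + mul X Y = 0 := by
      rw [← haddl]; simp [h0l]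
    exact eq_neg_of_add_eq_zero_left h
  have hnegr : ∀ X Y, mul X (-Y) = -mul X Y := by
    intro X Y; rw [hcomm, hnegl, hcomm]
  have hsubl : ∀ X Y Z, mul (X - Y) Z = mul X Z - mul Y Z := by
    intro X Y Z; rw [sub_eq_add_neg, haddl, hnegl, sub_eq_add_neg]
  have hsubr : ∀ X Y Z, mul X (Y - Z) = mul X Y - mul X Z := by
    intro X Y Z; rw [hcomm, hsubl, hcomm Y X, hcomm Z X]
  have hsmull : ∀ (k : ℕ) (X Y : V), mul (k • X) Y = k • mul X Y := by
    intro k X Y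
    induction k with
    | zero => simp [h0l]
    | succ j ih => rw [succ_nsmul, haddl, ih, succ_nsmul]
  have hsmulr : ∀ (k : ℕ) (X Y : V), mul X (k • Y) = k • mul X Y := by
    intro k X Y; rw [hcomm, hsmull, hcomm]
  have hunit' : ∀ X, mul X e = X := by intro X; rw [hcomm, hunit]
  have hlc : ∀ X Y Z, mul X (mul Y Z) = mul Y (mul X Z) := by
    intro X Y Z; rw [← hassoc, hcomm X Y, hassoc]
  -- Lie derivative basics
  have LDe : ∀ X Y, LD e X Y = 0 := by
    intro X Y
    have h := hHM e e X Y
    simp only [hunit] at h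
    exact (add_eq_left.mp h.symm)
  have hbr : ∀ Z X Y, ⁅Z, mul X Y⁆ = LD Z X Y + mul ⁅Z, X⁆ Y + mul X ⁅Z, Y⁆ := by
    intro Z X Y; rw [hLD]; abel
  have hpowadd : ∀ a b, mul (apow a) (apow b) = apow (a + b) := by
    intro a b
    induction a with
    | zero => rw [hpow0, hunit, Nat.zero_add]
    | succ j ih =>
        rw [hpowS, hassoc, ih, ← hpowS]
        congr 1
        omega
  have Lpow : ∀ (k : ℕ) (X Y : V),
      LD (apow k) X Y = k • mul (apow (k - 1)) (mul ⁅e, α⁆ (mul X Y)) := by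
    intro k
    induction k with
    | zero => intro X Y; simp [hpow0, LDe]
    | succ j ih =>
        intro X Y
        rw [hpowS, hHM, ih, hα]
        cases j with
        | zero => simp [hpow0, hunit, h0r, hunit']
        | succ i =>
            rw [hsmulr]
            simp only [Nat.add_sub_cancel]
            rw [← hassoc, ← hpowS]
            module
  -- LD (apow k) X α = k • apow k ∘ c ∘ X
  have Lpow2 : ∀ (k : ℕ) (X : V),
      LD (apow k) X α = k • mul (apow k) (mul ⁅e, α⁆ X) := by
    intro k X
    rw [Lpow]
    cases k with
    | zero => simp
    | succ j =>
        simp only [Nat.add_sub_cancel]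
        congr 1
        rw [hpowS]
        simp only [hassoc, hlc, hcomm]
  have Lα : ∀ k : ℕ, ⁅α, apow k⁆ = k • mul ⁅e, α⁆ (apow k) - mul ⁅e, α⁆ (apow k) := by
    intro k
    induction k with
    | zero =>
        rw [hpow0, hunit', ← lie_skew]
        simp
    | succ j ih =>
        rw [hpowS, hbr, hα, ih, lie_self, h0l]
        simp only [hsubr, hsmulr, hassoc, hlc, hcomm]
        module
  -- general one-sided step lemma
  have step : ∀ (γ₀ γ₁ : V), (∀ X Y, LD γ₀ X Y = mul ⁅e, γ₀⁆ (mul X Y)) →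
      ∀ n m : ℕ,
      ⁅mul γ₀ (apow n), mul γ₁ (apow (m + 1))⁆
        = mul α ⁅mul γ₀ (apow n), mul γ₁ (apow m)⁆
          + mul (apow (n + m)) ⁅γ₀, mul γ₁ α⁆
          - mul α (mul (apow (n + m)) ⁅γ₀, γ₁⁆) := by
    intro γ₀ γ₁ hγ₀ n m
    have hU : mul γ₁ (apow (m + 1)) = mul (mul γ₁ (apow m)) α := by
      rw [hpowS, hlc, hcomm α]
    rw [hU, hbr (mul γ₀ (apow n)) (mul γ₁ (apow m)) α]
    -- expand LD (γ₀ ∘ αⁿ) U α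
    rw [hHM γ₀ (apow n) (mul γ₁ (apow m)) α, Lpow2, hγ₀]
    -- expand ⁅γ₀ ∘ αⁿ, α⁆
    have hWα : ⁅mul γ₀ (apow n), α⁆
        = -(mul ⁅e, α⁆ (mul γ₀ (apow n))) - mul ⁅α, γ₀⁆ (apow n)
          - (n • mul γ₀ (mul ⁅e, α⁆ (apow n)) - mul γ₀ (mul ⁅e, α⁆ (apow n))) := by
      rw [← lie_skew, hbr α γ₀ (apow n), hα, Lα, hsubr, hsmulr]
      abel
    rw [hWα]
    -- expand ⁅γ₀, γ₁ ∘ α⁆ on the RHS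
    rw [hbr γ₀ γ₁ α, hγ₀, ← lie_skew α γ₀, ← hpowadd n m]
    -- now distribute and normalize
    simp only [haddr, haddl, hsubr, hsubl, hnegr, hnegl, hsmulr, hsmull]
    simp only [hassoc, hlc, hcomm]
    module
  -- swapped step lemma
  have step' : ∀ n m : ℕ,
      ⁅mul β₀ (apow (n + 1)), mul β₁ (apow m)⁆
        = mul α ⁅mul β₀ (apow n), mul β₁ (apow m)⁆
          + mul (apow (n + m)) ⁅mul β₀ α, β₁⁆
          - mul α (mul (apow (n + m)) ⁅β₀, β₁⁆) := by
    intro n m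
    rw [← lie_skew (mul β₀ (apow (n + 1))) (mul β₁ (apow m)), step β₁ β₀ hβ₁ m n,
      ← lie_skew (mul β₁ (apow m)) (mul β₀ (apow n)), ← lie_skew β₁ (mul β₀ α),
      ← lie_skew β₁ β₀, Nat.add_comm m n]
    simp only [hnegr]
    abel
  have hpow1 : apow 1 = α := by
    rw [show (1 : ℕ) = 0 + 1 from rfl, hpowS, hpow0, hunit']
  have main : ∀ N n m : ℕ, n + m = N + 1 →
      ⁅mul β₀ (apow n), mul β₁ (apow m)⁆
        = mul (apow N) (m • ⁅β₀, mul β₁ α⁆ + n • ⁅mul β₀ α, β₁⁆)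
          - N • mul (apow (N + 1)) ⁅β₀, β₁⁆ := by
    intro N
    induction N with
    | zero =>
        intro n m h
        rcases (by omega : n = 0 ∧ m = 1 ∨ n = 1 ∧ m = 0) with ⟨rfl, rfl⟩ | ⟨rfl, rfl⟩
        · simp [hpow0, hpow1, hunit, hunit']
        · simp [hpow0, hpow1, hunit, hunit']
    | succ N ih =>
        intro n m h
        cases m with
        | zero =>
            cases n with
            | zero => omega
            | succ n' =>
                have hk : n' = N + 1 := by omega
                subst hk
                rw [step' (N + 1) 0, ih (N + 1) 0 rfl]
                simp only [Nat.add_zero, hpowS, haddr, haddl, hsubr, hsubl, hsmulr, hsmull,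
                  hnegr, hnegl]
                simp only [hassoc, hlc, hcomm]
                module
        | succ m' =>
            have hk : n + m' = N + 1 := by omega
            rw [step β₀ β₁ hβ₀ n m', ih n m' hk, hk]
            simp only [hpowS, haddr, haddl, hsubr, hsubl, hsmulr, hsmull, hnegr, hnegl]
            simp only [hassoc, hlc, hcomm]
            module
  intro n m hnm
  have h := main (n + m - 1) n m (by omega)
  rw [show n + m - 1 + 1 = n + m from by omega] at h
  exact h
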